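/- Under the hypotheses of the previous statement with p = s: for arbitrary distinct nodes c_1,...,c_s, the local error satisfies ρ_n = O(k^{s+1}). -/

import Mathlib

set_option linter.unusedSectionVars false
set_option linter.unusedVariables false
set_option maxHeartbeats 2000000

open Finset Set Asymptotics Filter intervalIntegral Polynomial

/-- `φ_k(τA₀)x = (1/τ^k) ∫_0^τ e^{(τ−σ)A₀} σ^{k−1}/(k−1)! x dσ`, expressed through the
semigroup `S t = e^{tA₀}`. -/
noncomputable def phiOp {X : Type*} [NormedAddCommGroup X] [NormedSpace ℝ X]
    (S : ℝ → X →L[ℝ] X) (k : ℕ) (τ : ℝ) (x : X) : X :=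
  (1 / τ ^ k) • ∫ σ in (0:ℝ)..τ, (σ ^ (k-1) / (Nat.factorial (k-1) : ℝ)) • S (τ - σ) x

section SG
variable {X : Type*} [NormedAddCommGroup X] [NormedSpace ℝ X] [CompleteSpace X]
variable {S : ℝ → X →L[ℝ] X}

lemma sg_comm (hS0 : S 0 = 1)
    (hSadd : ∀ a b : ℝ, 0 ≤ a → 0 ≤ b → S (a + b) = S a ∘L S b)
    {A : X →ₗ[ℝ] X}
    (hgen : ∀ (x : X) (t : ℝ), 0 ≤ t → HasDerivAt (fun r => S r x) (A (S t x)) t)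
    {t : ℝ} (ht : 0 ≤ t) (x : X) : A (S t x) = S t (A x) := by
  have h1 : HasDerivWithinAt (fun h : ℝ => S (t + h) x) (A (S t x)) (Ici 0) 0 := by
    have hg : HasDerivAt (fun r => S r x) (A (S t x)) (t + id (0:ℝ)) := by
      simpa using hgen x t ht
    have h0 := hg.scomp (0:ℝ) ((hasDerivAt_id (0:ℝ)).const_add t)
    simp only [one_smul] at h0
    exact h0.hasDerivWithinAt
  have h2 : HasDerivWithinAt (fun h : ℝ => S (t + h) x) (S t (A x)) (Ici 0) 0 := by
    have h0 := ((S t).hasFDerivAt.comp_hasDerivAt (0:ℝ) (hgen x 0 le_rfl)).hasDerivWithinAt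
      (s := Ici (0:ℝ))
    rw [hS0] at h0
    simp only [ContinuousLinearMap.one_apply] at h0
    refine h0.congr (fun h hh => ?_) (by simp [hS0])
    have := hSadd t h ht hh
    simp [this]
  exact (uniqueDiffOn_Ici (0:ℝ) 0 self_mem_Ici).eq_deriv _ h1 h2

lemma sg_joint_cont (hScont : ∀ x : X, Continuous fun t => S t x)
    {T M : ℝ} (hSbdd : ∀ t ∈ Icc (0:ℝ) T, ‖S t‖ ≤ M)
    {γ : ℝ → ℝ} {x : ℝ → X} {s : Set ℝ}
    (hγ : ContinuousOn γ s) (hγT : ∀ σ ∈ s, γ σ ∈ Icc (0:ℝ) T)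
    (hx : ContinuousOn x s) :
    ContinuousOn (fun σ => S (γ σ) (x σ)) s := by
  intro σ0 hσ0
  have key : Tendsto (fun σ => S (γ σ) (x σ)) (nhdsWithin σ0 s) (nhds (S (γ σ0) (x σ0))) := by
    rw [tendsto_iff_norm_sub_tendsto_zero]
    have hb : ∀ σ ∈ s, ‖S (γ σ) (x σ) - S (γ σ0) (x σ0)‖ ≤
        M * ‖x σ - x σ0‖ + ‖S (γ σ) (x σ0) - S (γ σ0) (x σ0)‖ := by
      intro σ hσ
      have : S (γ σ) (x σ) - S (γ σ0) (x σ0) =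
          S (γ σ) (x σ - x σ0) + (S (γ σ) (x σ0) - S (γ σ0) (x σ0)) := by
        rw [map_sub]; abel
      rw [this]
      refine (norm_add_le _ _).trans (add_le_add ?_ le_rfl)
      exact ((S (γ σ)).le_opNorm _).trans
        (mul_le_mul_of_nonneg_right (hSbdd _ (hγT σ hσ)) (norm_nonneg _))
    have t1 : Tendsto (fun σ => M * ‖x σ - x σ0‖ + ‖S (γ σ) (x σ0) - S (γ σ0) (x σ0)‖)
        (nhdsWithin σ0 s) (nhds 0) := by
      have hx0 : Tendsto (fun σ => x σ - x σ0) (nhdsWithin σ0 s) (nhds 0) := by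
        have : ContinuousWithinAt (fun σ => x σ - x σ0) s σ0 :=
          (hx σ0 hσ0).sub continuousWithinAt_const
        simpa [ContinuousWithinAt] using this
      have hS1 : Tendsto (fun σ => S (γ σ) (x σ0) - S (γ σ0) (x σ0)) (nhdsWithin σ0 s)
          (nhds 0) := by
        have : ContinuousWithinAt (fun σ => S (γ σ) (x σ0)) s σ0 :=
          ((hScont (x σ0)).comp_continuousOn hγ) σ0 hσ0
        have h2 : Tendsto (fun σ => S (γ σ) (x σ0) - S (γ σ0) (x σ0)) (nhdsWithin σ0 s)
            (nhds (S (γ σ0) (x σ0) - S (γ σ0) (x σ0))) :=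
          this.tendsto.sub tendsto_const_nhds
        simpa using h2
      have := ((hx0.norm.const_mul M).add hS1.norm)
      simpa using this
    exact squeeze_zero_norm' (Filter.eventually_of_mem self_mem_nhdsWithin
      (fun σ hσ => by simpa using hb σ hσ)) t1
  exact key

end SG

section SG
variable {X : Type*} [NormedAddCommGroup X] [NormedSpace ℝ X] [CompleteSpace X]
variable {S : ℝ → X →L[ℝ] X}

lemma sg_prod_deriv
    (hScont : ∀ x : X, Continuous fun t => S t x)
    {T M : ℝ} (hSbdd : ∀ t ∈ Icc (0:ℝ) T, ‖S t‖ ≤ M)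
    {A : X →ₗ[ℝ] X}
    (hgen : ∀ (x : X) (t : ℝ), 0 ≤ t → HasDerivAt (fun r => S r x) (A (S t x)) t)
    {k : ℝ} (hkT : k ≤ T) {y : ℝ → X} {dv : X} {σ : ℝ} (hσ : σ ∈ Ioo 0 k)
    (hy : HasDerivAt y dv σ) :
    HasDerivAt (fun τ => S (k - τ) (y τ)) (S (k - σ) dv - A (S (k - σ) (y σ))) σ := by
  obtain ⟨hσ0, hσk⟩ := hσ
  rw [hasDerivAt_iff_isLittleO_nhds_zero]
  have hE1 : (fun h : ℝ => S (k - (σ + h)) (y (σ + h) - y σ - h • dv)) =o[nhds 0]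
      (fun h : ℝ => h) := by
    refine IsBigO.trans_isLittleO ?_ (hasDerivAt_iff_isLittleO_nhds_zero.1 hy)
    rw [isBigO_iff]
    refine ⟨M, ?_⟩
    have hmem : Ioo (-σ) (k - σ) ∈ nhds (0:ℝ) :=
      Ioo_mem_nhds (by linarith) (by linarith)
    filter_upwards [hmem] with h hh
    have h1 : k - (σ + h) ∈ Icc (0:ℝ) T :=
      ⟨by cases hh; linarith, by cases hh; linarith⟩
    exact ((S _).le_opNorm _).trans
      (mul_le_mul_of_nonneg_right (hSbdd _ h1) (norm_nonneg _))
  have hE2 : (fun h : ℝ => S (k - (σ + h)) (y σ) - S (k - σ) (y σ)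
      + h • A (S (k - σ) (y σ))) =o[nhds 0] (fun h : ℝ => h) := by
    have hg : HasDerivAt (fun t => S t (y σ)) (A (S (k - σ) (y σ))) (k - (σ + 0)) := by
      simpa using hgen (y σ) (k - σ) (by linarith)
    have hl : HasDerivAt (fun h : ℝ => k - (σ + h)) (-1) 0 := by
      simpa using ((hasDerivAt_id (0:ℝ)).const_add σ).const_sub k
    have h2 := hg.scomp (0:ℝ) hl
    rw [hasDerivAt_iff_isLittleO_nhds_zero] at h2
    refine h2.congr' ?_ EventuallyEq.rfl
    filter_upwards with h
    simp only [Function.comp, zero_add, add_zero]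
    module
  have hE3 : (fun h : ℝ => h • (S (k - (σ + h)) dv - S (k - σ) dv)) =o[nhds 0]
      (fun h : ℝ => h) := by
    have hc : Tendsto (fun h : ℝ => S (k - (σ + h)) dv - S (k - σ) dv) (nhds 0) (nhds 0) := by
      have hcont : Continuous fun h : ℝ => S (k - (σ + h)) dv :=
        (hScont dv).comp (by continuity)
      have := hcont.tendsto 0
      simp only [add_zero] at this
      simpa using this.sub (tendsto_const_nhds (x := S (k - σ) dv))
    have hco : (fun h : ℝ => S (k - (σ + h)) dv - S (k - σ) dv) =o[nhds 0]
        (fun _ : ℝ => (1:ℝ)) := (isLittleO_one_iff ℝ).2 hc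
    have := (isBigO_refl (fun h : ℝ => h) (nhds 0)).smul_isLittleO hco
    simpa using this
  have := (hE1.add hE2).add hE3
  refine this.congr' ?_ EventuallyEq.rfl
  filter_upwards with h
  simp only [map_sub, map_smul]
  module

lemma sg_master (hS0 : S 0 = 1)
    (hSadd : ∀ a b : ℝ, 0 ≤ a → 0 ≤ b → S (a + b) = S a ∘L S b)
    (hScont : ∀ x : X, Continuous fun t => S t x)
    {T M : ℝ} (hSbdd : ∀ t ∈ Icc (0:ℝ) T, ‖S t‖ ≤ M)
    {A : X →ₗ[ℝ] X}
    (hgen : ∀ (x : X) (t : ℝ), 0 ≤ t → HasDerivAt (fun r => S r x) (A (S t x)) t)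
    {k : ℝ} (hk0 : 0 ≤ k) (hkT : k ≤ T) {y d : ℝ → X}
    (hycont : ContinuousOn y (Icc 0 k))
    (hy : ∀ σ ∈ Ioo 0 k, HasDerivAt y (d σ) σ)
    (hcont : ContinuousOn (fun σ => d σ - A (y σ)) (Icc 0 k)) :
    y k - S k (y 0) = ∫ σ in (0:ℝ)..k, S (k - σ) (d σ - A (y σ)) := by
  have hγ : ∀ σ ∈ Icc (0:ℝ) k, k - σ ∈ Icc (0:ℝ) T := by
    intro σ hσ
    exact ⟨by cases hσ; linarith, by cases hσ; linarith⟩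
  have hγc : ContinuousOn (fun σ : ℝ => k - σ) (Icc 0 k) :=
    (continuous_const.sub continuous_id).continuousOn
  have hgc : ContinuousOn (fun σ => S (k - σ) (y σ)) (Icc 0 k) :=
    sg_joint_cont hScont hSbdd hγc hγ hycont
  have hint : IntervalIntegrable (fun σ => S (k - σ) (d σ - A (y σ))) MeasureTheory.volume 0 k := by
    apply ContinuousOn.intervalIntegrable
    rw [uIcc_of_le hk0]
    exact sg_joint_cont hScont hSbdd hγc hγ hcont
  have hderiv : ∀ σ ∈ Ioo (0:ℝ) k, HasDerivWithinAt (fun τ => S (k - τ) (y τ))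
      (S (k - σ) (d σ - A (y σ))) (Ioi σ) σ := by
    intro σ hσ
    have h1 := sg_prod_deriv hScont hSbdd hgen hkT hσ (hy σ hσ)
    have h2 : S (k - σ) (d σ - A (y σ)) = S (k - σ) (d σ) - A (S (k - σ) (y σ)) := by
      rw [map_sub, sg_comm hS0 hSadd hgen (by cases hσ; linarith) (y σ)]
    rw [h2]
    exact h1.hasDerivWithinAt
  have := integral_eq_sub_of_hasDeriv_right_of_le hk0 hgc hderiv hint
  rw [this]
  simp [hS0]
end SG

section SG
variable {X : Type*} [NormedAddCommGroup X] [NormedSpace ℝ X] [CompleteSpace X]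
variable {S : ℝ → X →L[ℝ] X}

variable (hS0 : S 0 = 1)
    (hSadd : ∀ a b : ℝ, 0 ≤ a → 0 ≤ b → S (a + b) = S a ∘L S b)
    (hScont : ∀ x : X, Continuous fun t => S t x)
    {T M : ℝ} (hSbdd : ∀ t ∈ Icc (0:ℝ) T, ‖S t‖ ≤ M)
    {A : X →ₗ[ℝ] X}
    (hgen : ∀ (x : X) (t : ℝ), 0 ≤ t → HasDerivAt (fun r => S r x) (A (S t x)) t)
    {k : ℝ} (hk0 : 0 ≤ k) (hkT : k ≤ T)

include hScont hSbdd hk0 hkT in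
/-- interval integrability of `σ ↦ S (k-σ) (v σ)` for continuous `v`. -/
lemma sg_intble {v : ℝ → X} (hv : Continuous v) :
    IntervalIntegrable (fun σ => S (k - σ) (v σ)) MeasureTheory.volume 0 k := by
  apply ContinuousOn.intervalIntegrable
  rw [uIcc_of_le hk0]
  refine sg_joint_cont hScont hSbdd
    (continuous_const.sub continuous_id).continuousOn
    (fun σ hσ => ⟨by cases hσ; linarith, by cases hσ; linarith⟩)
    hv.continuousOn

lemma powA (A : X →ₗ[ℝ] X) (n : ℕ) (x : X) : A ((A ^ n) x) = (A ^ (n+1)) x := by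
  rw [pow_succ']; rfl

include hS0 hSadd hScont hSbdd hgen hk0 hkT

lemma sg_step (m : ℕ) (x : X) :
    (∫ σ in (0:ℝ)..k, S (k - σ) ((σ ^ m / (Nat.factorial m : ℝ)) • x)) =
      (k ^ (m+1) / (Nat.factorial (m+1) : ℝ)) • x +
        ∫ σ in (0:ℝ)..k, S (k - σ) ((σ ^ (m+1) / (Nat.factorial (m+1) : ℝ)) • (A x)) := by
  have hder : ∀ σ : ℝ, HasDerivAt (fun σ : ℝ => (σ ^ (m+1) / (Nat.factorial (m+1) : ℝ)) • x)
      ((σ ^ m / (Nat.factorial m : ℝ)) • x) σ := by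
    intro σ
    have h1 : HasDerivAt (fun σ : ℝ => σ ^ (m+1) / (Nat.factorial (m+1) : ℝ))
        (σ ^ m / (Nat.factorial m : ℝ)) σ := by
      have := (hasDerivAt_pow (m+1) σ).div_const ((Nat.factorial (m+1) : ℝ))
      refine this.congr_deriv ?_
      rw [Nat.factorial_succ]
      have h0 : (Nat.factorial m : ℝ) ≠ 0 := Nat.cast_ne_zero.2 (Nat.factorial_ne_zero m)
      field_simp
      rw [Nat.add_sub_cancel]
      push_cast
      ring
    exact h1.smul_const x
  have hmaster := sg_master hS0 hSadd hScont hSbdd hgen hk0 hkT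
    (y := fun σ : ℝ => (σ ^ (m+1) / (Nat.factorial (m+1) : ℝ)) • x)
    (d := fun σ : ℝ => (σ ^ m / (Nat.factorial m : ℝ)) • x)
    (by fun_prop) (fun σ _ => hder σ)
    (by simp only [map_smul]; fun_prop)
  have hcongr : EqOn
      (fun σ : ℝ => S (k - σ) ((σ ^ m / (Nat.factorial m : ℝ)) • x -
        A ((σ ^ (m+1) / (Nat.factorial (m+1) : ℝ)) • x)))
      (fun σ : ℝ => S (k - σ) ((σ ^ m / (Nat.factorial m : ℝ)) • x) -
        S (k - σ) ((σ ^ (m+1) / (Nat.factorial (m+1) : ℝ)) • (A x))) (uIcc (0:ℝ) k) := by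
    intro σ _
    simp [map_sub, map_smul]
  rw [intervalIntegral.integral_congr hcongr,
    intervalIntegral.integral_sub
      (sg_intble hScont hSbdd hk0 hkT (v := fun σ : ℝ => (σ ^ m / (Nat.factorial m : ℝ)) • x)
        (by fun_prop))
      (sg_intble hScont hSbdd hk0 hkT
        (v := fun σ : ℝ => (σ ^ (m+1) / (Nat.factorial (m+1) : ℝ)) • (A x)) (by fun_prop))]
    at hmaster
  simp only [zero_pow (Nat.succ_ne_zero m), zero_div, zero_smul, map_zero, sub_zero] at hmaster
  rw [eq_sub_iff_add_eq] at hmaster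
  rw [← hmaster]

lemma sg_I1 (m : ℕ) (x : X) :
    S k x = (∑ l ∈ range (m+1), (k ^ l / (Nat.factorial l : ℝ)) • (A ^ l) x) +
      ∫ σ in (0:ℝ)..k, S (k - σ) ((σ ^ m / (Nat.factorial m : ℝ)) • (A ^ (m+1)) x) := by
  induction m with
  | zero =>
    have hmaster := sg_master hS0 hSadd hScont hSbdd hgen hk0 hkT
      (y := fun _ : ℝ => x) (d := fun _ : ℝ => (0:X))
      continuousOn_const (fun σ _ => hasDerivAt_const σ x) (by exact continuousOn_const)
    have hcongr : EqOn
        (fun σ : ℝ => S (k - σ) ((0:X) - A x))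
        (fun σ : ℝ => -(S (k - σ) ((σ ^ 0 / (Nat.factorial 0 : ℝ)) • (A ^ (0+1)) x)))
        (uIcc (0:ℝ) k) := by
      intro σ _
      simp [map_sub, pow_one]
    rw [intervalIntegral.integral_congr hcongr, intervalIntegral.integral_neg] at hmaster
    beta_reduce at hmaster
    have h2 : S k x - x = ∫ σ in (0:ℝ)..k,
        S (k - σ) ((σ ^ 0 / (Nat.factorial 0 : ℝ)) • (A ^ (0+1)) x) := by
      rw [← neg_sub x (S k x), hmaster, neg_neg]
    rw [sub_eq_iff_eq_add] at h2
    have hSum : (∑ l ∈ range (0+1), (k ^ l / (Nat.factorial l : ℝ)) • (A ^ l) x) = x := by simp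
    rw [h2, hSum]
    abel
  | succ m ih =>
    rw [ih, sg_step hS0 hSadd hScont hSbdd hgen hk0 hkT m ((A ^ (m+1)) x),
      powA A (m+1) x,
      Finset.sum_range_succ (fun l => (k ^ l / (Nat.factorial l : ℝ)) • (A ^ l) x) (m+1)]
    abel

lemma sg_I2 (n j : ℕ) (x : X) :
    (∫ σ in (0:ℝ)..k, S (k - σ) ((σ ^ j / (Nat.factorial j : ℝ)) • x)) =
      (∑ l ∈ range n, (k ^ (l+j+1) / (Nat.factorial (l+j+1) : ℝ)) • (A ^ l) x) +
        ∫ σ in (0:ℝ)..k, S (k - σ) ((σ ^ (n+j) / (Nat.factorial (n+j) : ℝ)) • (A ^ n) x) := by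
  induction n with
  | zero => simp
  | succ n ih =>
    rw [ih, sg_step hS0 hSadd hScont hSbdd hgen hk0 hkT (n+j) ((A ^ n) x),
      powA A n x]
    rw [Finset.sum_range_succ (fun l => (k ^ (l+j+1) / (Nat.factorial (l+j+1) : ℝ)) • (A ^ l) x) n]
    have e1 : n + j + 1 = n + 1 + j := by omega
    rw [e1]
    abel

end SG

section SG
variable {X : Type*} [NormedAddCommGroup X] [NormedSpace ℝ X] [CompleteSpace X]
variable {S : ℝ → X →L[ℝ] X}

variable (hScont : ∀ x : X, Continuous fun t => S t x)
    {T M : ℝ} (hSbdd : ∀ t ∈ Icc (0:ℝ) T, ‖S t‖ ≤ M)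
    {k : ℝ} (hk0 : 0 < k) (hkT : k ≤ T)

include hScont hSbdd hkT in
/-- `phiOp` through `S (k-σ)` applied to a vector. -/
lemma phi_eq (m : ℕ) (x : X) : phiOp S m k x =
    (1 / k ^ m) • ∫ σ in (0:ℝ)..k, S (k - σ) ((σ ^ (m-1) / (Nat.factorial (m-1) : ℝ)) • x) := by
  unfold phiOp
  congr 1
  refine intervalIntegral.integral_congr fun σ _ => ?_
  rw [map_smul]

include hScont hSbdd hk0 hkT in
lemma phi_int (m : ℕ) (x : X) :
    k ^ (m+1) • phiOp S (m+1) k x =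
      ∫ σ in (0:ℝ)..k, S (k - σ) ((σ ^ m / (Nat.factorial m : ℝ)) • x) := by
  rw [phi_eq hScont hSbdd hkT (m+1) x]
  rw [smul_smul]
  have : k ^ (m+1) * (1 / k ^ (m+1)) = 1 := by
    field_simp
  rw [this, one_smul]
  norm_num

include hScont hSbdd hk0 hkT in
lemma phi_add (m : ℕ) (x y : X) :
    phiOp S m k (x + y) = phiOp S m k x + phiOp S m k y := by
  rw [phi_eq hScont hSbdd hkT m x, phi_eq hScont hSbdd hkT m y,
    phi_eq hScont hSbdd hkT m (x+y), ← smul_add,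
    ← intervalIntegral.integral_add
      (sg_intble hScont hSbdd hk0.le hkT (by fun_prop))
      (sg_intble hScont hSbdd hk0.le hkT (by fun_prop))]
  congr 1
  refine intervalIntegral.integral_congr fun σ _ => ?_
  rw [← map_add, smul_add]

include hScont hSbdd hk0 hkT in
lemma phi_smul (m : ℕ) (r : ℝ) (x : X) :
    phiOp S m k (r • x) = r • phiOp S m k x := by
  rw [phi_eq hScont hSbdd hkT m x, phi_eq hScont hSbdd hkT m (r • x)]
  rw [smul_comm]
  congr 1
  rw [← intervalIntegral.integral_smul]
  refine intervalIntegral.integral_congr fun σ _ => ?_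
  rw [smul_comm (σ ^ (m - 1) / ((Nat.factorial (m-1)) : ℝ)) r x, map_smul]

include hScont hSbdd hk0 hkT in
lemma phi_sum {n : ℕ} (m : ℕ) (v : ℕ → X) :
    phiOp S m k (∑ r ∈ range n, v r) = ∑ r ∈ range n, phiOp S m k (v r) := by
  induction n with
  | zero => simp [phi_eq hScont hSbdd hkT m]
  | succ n ih =>
    rw [Finset.sum_range_succ, Finset.sum_range_succ,
      phi_add hScont hSbdd hk0 hkT, ih]

include hSbdd hk0 hkT in
lemma phi_norm (hM0 : 0 ≤ M) (m : ℕ) (x : X) :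
    ‖phiOp S (m+1) k x‖ ≤ M * ‖x‖ := by
  unfold phiOp
  rw [norm_smul]
  have hb : ∀ σ ∈ Set.uIoc (0:ℝ) k,
      ‖(σ ^ ((m+1)-1) / (Nat.factorial ((m+1)-1) : ℝ)) • S (k - σ) x‖ ≤
        k ^ m / (Nat.factorial m : ℝ) * (M * ‖x‖) := by
    intro σ hσ
    rw [Set.uIoc_of_le hk0.le] at hσ
    obtain ⟨h1, h2⟩ := hσ
    rw [norm_smul, Nat.add_sub_cancel]
    have e1 : ‖σ ^ m / (Nat.factorial m : ℝ)‖ ≤ k ^ m / (Nat.factorial m : ℝ) := by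
      rw [Real.norm_eq_abs, abs_div, abs_pow, Nat.abs_cast, abs_of_nonneg h1.le]
      have := pow_le_pow_left₀ h1.le h2 m
      exact (div_le_div_iff_of_pos_right (by positivity)).2 this
    have e2 : ‖S (k - σ) x‖ ≤ M * ‖x‖ := by
      refine ((S (k-σ)).le_opNorm x).trans ?_
      exact mul_le_mul_of_nonneg_right (hSbdd _ ⟨by linarith, by linarith⟩) (norm_nonneg _)
    exact mul_le_mul e1 e2 (norm_nonneg _) (by positivity)
  have hI := intervalIntegral.norm_integral_le_of_norm_le_const hb
  rw [sub_zero] at hI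
  calc ‖1 / k ^ (m+1)‖ * ‖∫ σ in (0:ℝ)..k, (σ ^ ((m+1)-1) / (Nat.factorial ((m+1)-1) : ℝ)) •
        S (k - σ) x‖
      ≤ (1 / k ^ (m+1)) * (k ^ m / (Nat.factorial m : ℝ) * (M * ‖x‖) * |k|) := by
        refine mul_le_mul ?_ hI (norm_nonneg _) (by positivity)
        rw [Real.norm_eq_abs, abs_of_nonneg (by positivity)]
    _ = (M * ‖x‖) / (Nat.factorial m : ℝ) := by
        rw [abs_of_nonneg hk0.le]
        field_simp
        ring
    _ ≤ M * ‖x‖ := by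
        have h1 : (1:ℝ) ≤ (Nat.factorial m : ℝ) :=
          Nat.one_le_cast.2 (Nat.one_le_iff_ne_zero.2 (Nat.factorial_ne_zero m))
        have h2 : 0 ≤ M * ‖x‖ := by positivity
        calc (M * ‖x‖) / (Nat.factorial m : ℝ) ≤ (M * ‖x‖) / 1 := by
              apply div_le_div_of_nonneg_left h2 (by norm_num) h1 |>.trans le_rfl
          _ = M * ‖x‖ := div_one _
end SG

section Taylor
variable {X : Type*} [NormedAddCommGroup X] [NormedSpace ℝ X] [CompleteSpace X]

lemma taylor_int {n : ℕ} {f : ℝ → X} (hf : ContDiff ℝ (n+1 : ℕ) f) (t σ : ℝ) :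
    f (t + σ) - ∑ r ∈ range (n+1), (σ ^ r / (Nat.factorial r : ℝ)) • iteratedDeriv r f t =
      ∫ τ in (0:ℝ)..σ, ((σ - τ) ^ n / (Nat.factorial n : ℝ)) • iteratedDeriv (n+1) f (t + τ) := by
  set g : ℝ → X := fun τ => ∑ r ∈ range (n+1),
    ((σ - τ) ^ r / (Nat.factorial r : ℝ)) • iteratedDeriv r f (t + τ) with hg
  have hD : ∀ r : ℕ, r < n + 1 → ∀ τ : ℝ,
      HasDerivAt (fun τ => iteratedDeriv r f (t + τ)) (iteratedDeriv (r+1) f (t + τ)) τ := by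
    intro r hr τ
    have h1 : HasDerivAt (iteratedDeriv r f) (iteratedDeriv (r+1) f (t + τ)) (t + τ) := by
      have hd := (hf.differentiable_iteratedDeriv r (by exact_mod_cast hr)).differentiableAt
        (x := t + τ)
      have := hd.hasDerivAt
      rwa [← iteratedDeriv_succ] at this
    have h2 : HasDerivAt (fun τ : ℝ => t + τ) 1 τ := by
      simpa using (hasDerivAt_id τ).const_add t
    have := h1.scomp τ h2
    simpa [Function.comp_def] using this
  have hgder : ∀ τ : ℝ, HasDerivAt g
      (((σ - τ) ^ n / (Nat.factorial n : ℝ)) • iteratedDeriv (n+1) f (t + τ)) τ := by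
    intro τ
    have hterm : ∀ r ∈ range (n+1), HasDerivAt
        (fun τ => ((σ - τ) ^ r / (Nat.factorial r : ℝ)) • iteratedDeriv r f (t + τ))
        ((((σ - τ) ^ r / (Nat.factorial r : ℝ)) • iteratedDeriv (r+1) f (t + τ)) -
          (((r : ℝ) * (σ - τ) ^ (r-1) / (Nat.factorial r : ℝ)) • iteratedDeriv r f (t + τ))) τ := by
      intro r hr
      have hc : HasDerivAt (fun τ : ℝ => (σ - τ) ^ r / (Nat.factorial r : ℝ))
          (-((r : ℝ) * (σ - τ) ^ (r-1)) / (Nat.factorial r : ℝ)) τ := by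
        have hbase : HasDerivAt (fun τ : ℝ => σ - τ) (-1) τ := by
          simpa using ((hasDerivAt_id τ).const_sub σ)
        have := (hbase.pow r).div_const ((Nat.factorial r : ℝ))
        refine this.congr_deriv ?_
        ring
      have hv := hD r (mem_range.1 hr) τ
      have := hc.smul hv
      refine this.congr_deriv ?_
      rw [neg_div, neg_smul]
      abel
    have hsum := HasDerivAt.fun_sum hterm
    rw [← hg] at hsum
    convert hsum using 1
    rw [Finset.sum_sub_distrib]
    rw [Finset.sum_range_succ (fun r => ((σ - τ) ^ r / (Nat.factorial r : ℝ)) •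
      iteratedDeriv (r+1) f (t + τ)) n]
    rw [Finset.sum_range_succ' (fun r => ((r : ℝ) * (σ - τ) ^ (r-1) / (Nat.factorial r : ℝ)) •
      iteratedDeriv r f (t + τ)) n]
    have e0 : (((0:ℕ) : ℝ) * (σ - τ) ^ (0-1) / (Nat.factorial 0 : ℝ)) •
        iteratedDeriv 0 f (t + τ) = 0 := by
      simp
    have e1 : ∀ r : ℕ, (((r+1 : ℕ) : ℝ) * (σ - τ) ^ (r+1-1) / (Nat.factorial (r+1) : ℝ)) •
        iteratedDeriv (r+1) f (t + τ) =
        ((σ - τ) ^ r / (Nat.factorial r : ℝ)) • iteratedDeriv (r+1) f (t + τ) := by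
      intro r
      congr 1
      rw [Nat.factorial_succ]
      push_cast
      have h0 : (Nat.factorial r : ℝ) ≠ 0 := Nat.cast_ne_zero.2 (Nat.factorial_ne_zero r)
      field_simp
    rw [e0]
    have e2 : (∑ r ∈ range n, (((r+1 : ℕ) : ℝ) * (σ - τ) ^ (r+1-1) /
        (Nat.factorial (r+1) : ℝ)) • iteratedDeriv (r+1) f (t + τ)) =
        ∑ r ∈ range n, ((σ - τ) ^ r / (Nat.factorial r : ℝ)) • iteratedDeriv (r+1) f (t + τ) :=
      Finset.sum_congr rfl fun r _ => e1 r
    rw [e2]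
    abel
  have hcont : Continuous fun τ : ℝ =>
      ((σ - τ) ^ n / (Nat.factorial n : ℝ)) • iteratedDeriv (n+1) f (t + τ) := by
    have h1 : Continuous (iteratedDeriv (n+1) f) :=
      hf.continuous_iteratedDeriv (n+1) (by exact_mod_cast le_rfl)
    fun_prop
  have hftc := intervalIntegral.integral_eq_sub_of_hasDerivAt
    (f := g) (a := (0:ℝ)) (b := σ)
    (fun τ _ => hgder τ) (hcont.intervalIntegrable 0 σ)
  rw [hftc]
  have hgs : g σ = f (t + σ) := by
    show (∑ r ∈ range (n+1), ((σ - σ) ^ r / (Nat.factorial r : ℝ)) •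
      iteratedDeriv r f (t + σ)) = f (t + σ)
    rw [Finset.sum_eq_single 0]
    · simp
    · intro r _ hr
      rw [sub_self, zero_pow hr, zero_div, zero_smul]
    · intro h
      simp at h
  have hg0 : g 0 = ∑ r ∈ range (n+1), (σ ^ r / (Nat.factorial r : ℝ)) • iteratedDeriv r f t := by
    show (∑ r ∈ range (n+1), ((σ - 0) ^ r / (Nat.factorial r : ℝ)) •
      iteratedDeriv r f (t + 0)) = _
    simp only [sub_zero, add_zero]
  rw [hgs, hg0]

lemma taylor_bound {s : ℕ} {f : ℝ → X} (hf : ContDiff ℝ (s : ℕ) f) (R : ℝ) (hR : 0 ≤ R) :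
    ∃ C2 : ℝ, 0 ≤ C2 ∧ ∀ t σ : ℝ, |t| ≤ R → |σ| ≤ R →
      ‖f (t + σ) - ∑ r ∈ range s, (σ ^ r / (Nat.factorial r : ℝ)) • iteratedDeriv r f t‖ ≤
        C2 * |σ| ^ s := by
  rcases Nat.eq_zero_or_pos s with hs | hs
  · subst hs
    obtain ⟨C, hC⟩ := (isCompact_Icc (a := -(2*R)) (b := 2*R)).exists_bound_of_continuousOn
      (hf.continuous.continuousOn)
    refine ⟨max C 0, le_max_right _ _, fun t σ ht hσ => ?_⟩
    simp only [range_zero, Finset.sum_empty, sub_zero, pow_zero, mul_one]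
    refine le_trans ?_ (le_max_left C 0)
    have : t + σ ∈ Icc (-(2*R)) (2*R) := by
      constructor <;> [skip; skip] <;>
        (cases abs_le.1 ht; cases abs_le.1 hσ; linarith)
    exact hC _ this
  · obtain ⟨n, rfl⟩ : ∃ n, s = n + 1 := ⟨s - 1, by omega⟩
    obtain ⟨C, hC⟩ := (isCompact_Icc (a := -(2*R)) (b := 2*R)).exists_bound_of_continuousOn
      ((hf.continuous_iteratedDeriv (n+1) (by exact_mod_cast le_rfl)).continuousOn)
    have hC0 : 0 ≤ max C 0 := le_max_right _ _
    refine ⟨max C 0 / (Nat.factorial n : ℝ), by positivity, fun t σ ht hσ => ?_⟩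
    rw [taylor_int hf t σ]
    have hb : ∀ τ ∈ Set.uIoc (0:ℝ) σ,
        ‖((σ - τ) ^ n / (Nat.factorial n : ℝ)) • iteratedDeriv (n+1) f (t + τ)‖ ≤
          |σ| ^ n / (Nat.factorial n : ℝ) * max C 0 := by
      intro τ hτ
      have hτ1 : |τ| ≤ |σ| ∧ |σ - τ| ≤ |σ| := by
        rcases le_or_gt 0 σ with h | h
        · rw [Set.uIoc_of_le h] at hτ
          obtain ⟨h1, h2⟩ := hτ
          constructor
          · rw [abs_of_nonneg (by linarith : (0:ℝ) ≤ τ), abs_of_nonneg h]; linarith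
          · rw [abs_of_nonneg (by linarith : (0:ℝ) ≤ σ - τ), abs_of_nonneg h]; linarith
        · rw [Set.uIoc_of_ge h.le] at hτ
          obtain ⟨h1, h2⟩ := hτ
          constructor
          · rw [abs_of_nonpos (by linarith : τ ≤ (0:ℝ)), abs_of_nonpos h.le]; linarith
          · rw [abs_of_nonpos (by linarith : σ - τ ≤ (0:ℝ)), abs_of_nonpos h.le]; linarith
      have htτ : t + τ ∈ Icc (-(2*R)) (2*R) := by
        have h1 := abs_le.1 ht
        have h2 := abs_le.1 ((hτ1.1).trans hσ)
        constructor <;> (cases h1; cases h2; linarith)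
      have h3 : ‖iteratedDeriv (n+1) f (t + τ)‖ ≤ max C 0 :=
        (hC _ htτ).trans (le_max_left _ _)
      rw [norm_smul]
      have h4 : ‖(σ - τ) ^ n / (Nat.factorial n : ℝ)‖ ≤ |σ| ^ n / (Nat.factorial n : ℝ) := by
        rw [Real.norm_eq_abs, abs_div, abs_pow, Nat.abs_cast]
        have h5 : |σ - τ| ^ n ≤ |σ| ^ n := pow_le_pow_left₀ (abs_nonneg _) hτ1.2 n
        have h6 : (0:ℝ) < (Nat.factorial n : ℝ) :=
          Nat.cast_pos.2 (Nat.factorial_pos n)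
        exact (div_le_div_iff_of_pos_right h6).2 h5
      exact mul_le_mul h4 h3 (norm_nonneg _) (by positivity)
    have := intervalIntegral.norm_integral_le_of_norm_le_const hb
    refine this.trans (le_of_eq ?_)
    rw [sub_zero, pow_succ]
    ring

end Taylor

lemma interp_exact {s : ℕ} (c : Fin s → ℝ) (hc : Function.Injective c)
    {r : ℕ} (hr : r < s) (θ : ℝ) :
    (∑ i : Fin s, c i ^ r * ∏ j ∈ univ.filter (· ≠ i), (θ - c j) / (c i - c j)) = θ ^ r := by
  classical
  set q : ℝ[X] := (∑ i : Fin s, C (c i ^ r) *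
      ∏ j ∈ univ.filter (· ≠ i), (C ((c i - c j)⁻¹) * (X - C (c j)))) - X ^ r with hq
  have heval : ∀ θ : ℝ, q.eval θ =
      (∑ i : Fin s, c i ^ r * ∏ j ∈ univ.filter (· ≠ i), (θ - c j) / (c i - c j)) - θ ^ r := by
    intro θ
    simp only [hq, eval_sub, eval_pow, eval_X, eval_finset_sum, eval_mul, eval_C, eval_prod]
    congr 1
    refine Finset.sum_congr rfl fun i _ => ?_
    congr 1
    refine Finset.prod_congr rfl fun j _ => ?_
    rw [div_eq_inv_mul]
  have hroot : ∀ m : Fin s, q.eval (c m) = 0 := by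
    intro m
    rw [heval]
    rw [sub_eq_zero]
    rw [Finset.sum_eq_single m]
    · have : (∏ j ∈ univ.filter (· ≠ m), (c m - c j) / (c m - c j)) = 1 := by
        refine Finset.prod_eq_one fun j hj => ?_
        have hjm : j ≠ m := by simpa using hj
        have : c m - c j ≠ 0 := sub_ne_zero.2 fun h => hjm (hc h).symm
        exact div_self this
      rw [this, mul_one]
    · intro i _ him
      have hm : m ∈ univ.filter (· ≠ i) := by simpa using fun h => him h.symm
      rw [Finset.prod_eq_zero hm (by simp), mul_zero]
    · intro h
      exact absurd (Finset.mem_univ m) h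
  have hdeg : q.natDegree < s := by
    have h1 : (∑ i : Fin s, C (c i ^ r) *
        ∏ j ∈ univ.filter (· ≠ i), (C ((c i - c j)⁻¹) * (X - C (c j)))).natDegree ≤ s - 1 := by
      refine Polynomial.natDegree_sum_le_of_forall_le _ _ fun i _ => ?_
      refine (Polynomial.natDegree_C_mul_le _ _).trans ?_
      refine (Polynomial.natDegree_prod_le _ _).trans ?_
      have hcard : (univ.filter (· ≠ i) : Finset (Fin s)).card = s - 1 := by
        rw [Finset.filter_ne', Finset.card_erase_of_mem (Finset.mem_univ i), Finset.card_univ,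
          Fintype.card_fin]
      calc (∑ j ∈ univ.filter (· ≠ i), (C ((c i - c j)⁻¹) * (X - C (c j))).natDegree)
          ≤ ∑ j ∈ univ.filter (· ≠ i), 1 := by
            refine Finset.sum_le_sum fun j _ => ?_
            exact (Polynomial.natDegree_C_mul_le _ _).trans (Polynomial.natDegree_X_sub_C_le _)
        _ = s - 1 := by rw [Finset.sum_const, smul_eq_mul, mul_one, hcard]
    have h2 : (X ^ r : ℝ[X]).natDegree ≤ s - 1 := by
      rw [Polynomial.natDegree_X_pow]
      omega
    have := Polynomial.natDegree_sub_le (∑ i : Fin s, C (c i ^ r) *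
        ∏ j ∈ univ.filter (· ≠ i), (C ((c i - c j)⁻¹) * (X - C (c j)))) (X ^ r)
    rw [← hq] at this
    omega
  have hq0 : q = 0 := by
    refine Polynomial.eq_zero_of_natDegree_lt_card_of_eval_eq_zero q hc hroot ?_
    rwa [Fintype.card_fin]
  have := heval θ
  rw [hq0] at this
  simp only [eval_zero] at this
  linarith [this]

lemma interp_coeff {s : ℕ} (c : Fin s → ℝ) (hc : Function.Injective c)
    (a : Fin s → Fin s → ℝ)
    (ha : ∀ i (θ : ℝ),
      (∏ j ∈ univ.filter (· ≠ i), (θ - c j) / (c i - c j)) =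
        ∑ l : Fin s, a i l * θ ^ (l : ℕ) / (Nat.factorial l : ℝ))
    {r : ℕ} (hr : r < s) (l0 : Fin s) :
    (∑ i : Fin s, c i ^ r * a i l0) =
      if (l0 : ℕ) = r then (Nat.factorial r : ℝ) else 0 := by
  classical
  set p : ℝ[X] := ∑ l : Fin s,
    C ((∑ i : Fin s, c i ^ r * a i l) / (Nat.factorial l : ℝ)) * X ^ (l : ℕ) with hp
  have hpeval : ∀ θ : ℝ, p.eval θ = θ ^ r := by
    intro θ
    have h1 := interp_exact c hc hr θ
    have h2 : (∑ i : Fin s, c i ^ r * ∏ j ∈ univ.filter (· ≠ i), (θ - c j) / (c i - c j)) =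
        ∑ i : Fin s, c i ^ r * ∑ l : Fin s, a i l * θ ^ (l : ℕ) / (Nat.factorial l : ℝ) := by
      refine Finset.sum_congr rfl fun i _ => ?_
      rw [ha i θ]
    rw [h2] at h1
    rw [hp]
    simp only [eval_finset_sum, eval_mul, eval_C, eval_pow, eval_X]
    have h3 : (∑ i : Fin s, c i ^ r * ∑ l : Fin s, a i l * θ ^ (l:ℕ) / (Nat.factorial l : ℝ))
        = ∑ l : Fin s, (∑ i : Fin s, c i ^ r * a i l) / (Nat.factorial l : ℝ) * θ ^ (l:ℕ) := by
      simp_rw [Finset.mul_sum]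
      rw [Finset.sum_comm]
      refine Finset.sum_congr rfl fun l _ => ?_
      rw [Finset.sum_div, Finset.sum_mul]
      refine Finset.sum_congr rfl fun i _ => ?_
      ring
    rw [← h1, h3]
  have hpX : p = X ^ r := by
    apply Polynomial.funext
    intro θ
    rw [hpeval θ, eval_pow, eval_X]
  have hcoeff : p.coeff (l0 : ℕ) =
      (∑ i : Fin s, c i ^ r * a i l0) / (Nat.factorial l0 : ℝ) := by
    rw [hp, Polynomial.finset_sum_coeff]
    rw [Finset.sum_eq_single l0]
    · rw [Polynomial.coeff_C_mul, Polynomial.coeff_X_pow, if_pos rfl, mul_one]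
    · intro l _ hl
      rw [Polynomial.coeff_C_mul, Polynomial.coeff_X_pow, if_neg, mul_zero]
      exact fun h => hl (Fin.ext h.symm)
    · intro h
      exact absurd (Finset.mem_univ l0) h
  rw [hpX, Polynomial.coeff_X_pow] at hcoeff
  have hfac : (Nat.factorial l0 : ℝ) ≠ 0 := Nat.cast_ne_zero.2 (Nat.factorial_ne_zero _)
  by_cases hlr : (l0 : ℕ) = r
  · rw [if_pos hlr] at hcoeff ⊢
    field_simp at hcoeff
    rw [← hcoeff, hlr]
  · rw [if_neg hlr] at hcoeff ⊢
    field_simp at hcoeff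
    simpa using hcoeff.symm

lemma csl {X : Type*} [AddCommGroup X] [Module ℝ X]
    {s : ℕ} (c : Fin s → ℝ) (hc : Function.Injective c)
    (a : Fin s → Fin s → ℝ)
    (ha : ∀ i (θ : ℝ),
      (∏ j ∈ univ.filter (· ≠ i), (θ - c j) / (c i - c j)) =
        ∑ l : Fin s, a i l * θ ^ (l : ℕ) / (Nat.factorial l : ℝ))
    (k : ℝ) (G : Fin s → ℕ → X) :
    (∑ i : Fin s, ∑ j : Fin s, ∑ r ∈ range s,
        (a i j * ((c i * k) ^ r / (Nat.factorial r : ℝ))) • G j r)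
      = ∑ j : Fin s, k ^ (j : ℕ) • G j (j : ℕ) := by
  rw [Finset.sum_comm]
  refine Finset.sum_congr rfl fun j _ => ?_
  rw [Finset.sum_comm]
  have hstep : ∀ r ∈ range s,
      (∑ i : Fin s, (a i j * ((c i * k) ^ r / (Nat.factorial r : ℝ))) • G j r) =
        ((if (j : ℕ) = r then (Nat.factorial r : ℝ) else 0) *
          (k ^ r / (Nat.factorial r : ℝ))) • G j r := by
    intro r hr
    rw [← Finset.sum_smul]
    congr 1
    rw [← interp_coeff c hc a ha (mem_range.1 hr) j, Finset.sum_mul]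
    refine Finset.sum_congr rfl fun i _ => ?_
    rw [mul_pow]
    ring
  rw [Finset.sum_congr rfl hstep]
  rw [Finset.sum_eq_single (j : ℕ)]
  · rw [if_pos rfl]
    congr 1
    have h0 : (Nat.factorial (j:ℕ) : ℝ) ≠ 0 := Nat.cast_ne_zero.2 (Nat.factorial_ne_zero _)
    field_simp
  · intro r _ hrj
    rw [if_neg (fun h => hrj h.symm), zero_mul, zero_smul]
  · intro h
    exact absurd (mem_range.2 (j.isLt)) h

/-- Theorem 4.4: with `p = s` in the regularity assumption and in the scheme, for
arbitrary distinct nodes `c₁,…,c_s` the local truncation error of the exponential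
quadrature rule with boundary corrections satisfies `ρ_n = O(k^{s+1})`. -/
theorem local_error_order_s_plus_one {X : Type*} [NormedAddCommGroup X]
    [NormedSpace ℝ X] [CompleteSpace X]
    (S : ℝ → X →L[ℝ] X) (hS0 : S 0 = 1)
    (hSadd : ∀ a b : ℝ, 0 ≤ a → 0 ≤ b → S (a + b) = S a ∘L S b)
    (hScont : ∀ x : X, Continuous fun t => S t x)
    (T : ℝ) (hT : 0 < T)
    (hSbdd : ∃ M : ℝ, ∀ t ∈ Icc (0:ℝ) T, ‖S t‖ ≤ M)
    (A : X →ₗ[ℝ] X)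
    (hgen : ∀ (x : X) (t : ℝ), 0 ≤ t → HasDerivAt (fun r => S r x) (A (S t x)) t)
    (s : ℕ) (c : Fin s → ℝ) (hc : Function.Injective c)
    (a : Fin s → Fin s → ℝ)
    (ha : ∀ i (θ : ℝ),
      (∏ j ∈ univ.filter (· ≠ i), (θ - c j) / (c i - c j)) =
        ∑ l : Fin s, a i l * θ ^ (l : ℕ) / (Nat.factorial l : ℝ))
    (u f : ℝ → X)
    (hode : ∀ t : ℝ, HasDerivAt u (A (u t) + f t) t)
    (hreg : ∀ j ≤ s + 1, Continuous fun t => (A ^ (s + 1 - j)) (iteratedDeriv j u t))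
    (hf : ContDiff ℝ s f)
    (hfreg : ∀ l r : ℕ, l + r ≤ s → Continuous fun t => (A ^ l) (iteratedDeriv r f t)) :
    ∃ C : ℝ, ∀ tn k : ℝ, 0 ≤ tn → 0 < k → tn + k ≤ T →
      ‖u (tn + k) -
          ((∑ l ∈ range (s+1), (k ^ l / (Nat.factorial l : ℝ)) • (A ^ l) (u tn)) +
            k ^ (s+1) • phiOp S (s+1) k ((A ^ (s+1)) (u tn)) +
            k • ∑ i : Fin s, ∑ j : Fin s, a i j •
              ((∑ l ∈ range s,
                  (k ^ l / (Nat.factorial (l + (j : ℕ) + 1) : ℝ)) •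
                    (A ^ l) (f (tn + c i * k))) +
                k ^ s • phiOp S (s + (j : ℕ) + 1) k ((A ^ s) (f (tn + c i * k)))))‖ ≤
        C * k ^ (s+1) := by
  classical
  obtain ⟨M0, hM0⟩ := hSbdd
  set M := max M0 0 with hM
  have hMbdd : ∀ t ∈ Icc (0:ℝ) T, ‖S t‖ ≤ M := fun t ht => (hM0 t ht).trans (le_max_left _ _)
  have hMnn : 0 ≤ M := le_max_right _ _
  set B : ℝ := 1 + ∑ i : Fin s, |c i| with hB
  have hB1 : 1 ≤ B := by
    rw [hB]
    have : (0:ℝ) ≤ ∑ i : Fin s, |c i| := Finset.sum_nonneg fun i _ => abs_nonneg _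
    linarith
  have hBc : ∀ i : Fin s, |c i| ≤ B := by
    intro i
    have h1 : |c i| ≤ ∑ i : Fin s, |c i| :=
      Finset.single_le_sum (f := fun i => |c i|) (fun _ _ => abs_nonneg _) (mem_univ i)
    rw [hB]; linarith
  set R : ℝ := B * T with hR
  have hR0 : 0 ≤ R := by
    rw [hR]; nlinarith
  obtain ⟨C2, hC20, hC2⟩ := taylor_bound hf R hR0
  set Ca : ℝ := ∑ i : Fin s, ∑ j : Fin s, |a i j| with hCa
  have hCa0 : 0 ≤ Ca :=
    Finset.sum_nonneg fun i _ => Finset.sum_nonneg fun j _ => abs_nonneg _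
  refine ⟨M * C2 + Ca * (M * (C2 * B ^ s)), fun tn k htn hk htk => ?_⟩
  have hkT : k ≤ T := by linarith
  have hk0 : (0:ℝ) ≤ k := hk.le
  have hTR : T ≤ R := by rw [hR]; nlinarith
  have htnR : |tn| ≤ R := by rw [abs_of_nonneg htn]; linarith
  set P : ℝ → X := fun σ =>
    ∑ r ∈ range s, (σ ^ r / (Nat.factorial r : ℝ)) • iteratedDeriv r f tn with hP
  set Rem : ℝ → X := fun σ => f (tn + σ) - P σ with hRemd
  have hPcont : Continuous P := by
    rw [hP]
    refine continuous_finset_sum _ fun r _ => ?_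
    exact (by fun_prop : Continuous fun σ : ℝ => σ ^ r / (Nat.factorial r : ℝ)).smul
      continuous_const
  have hfc : Continuous f := hf.continuous
  have hRemc : Continuous Rem := by
    rw [hRemd]
    exact (hfc.comp (by continuity)).sub hPcont
  have hRembd : ∀ σ : ℝ, |σ| ≤ R → ‖Rem σ‖ ≤ C2 * |σ| ^ s := by
    intro σ hσ
    have := hC2 tn σ htnR hσ
    simpa only [hRemd, hP] using this
  have huc : Continuous u := by
    rw [continuous_iff_continuousAt]
    exact fun t => (hode t).continuousAt
  -- variation of constants
  have hvoc : u (tn + k) = S k (u tn) + ∫ σ in (0:ℝ)..k, S (k - σ) (f (tn + σ)) := by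
    have hmaster := sg_master hS0 hSadd hScont hMbdd hgen hk0 hkT
      (y := fun σ => u (tn + σ)) (d := fun σ => A (u (tn + σ)) + f (tn + σ))
      ((huc.comp (by continuity)).continuousOn)
      (fun σ _ => by
        have h2 : HasDerivAt (fun σ : ℝ => tn + σ) 1 σ := by
          simpa using (hasDerivAt_id σ).const_add tn
        have := (hode (tn + σ)).scomp σ h2
        simpa [Function.comp_def] using this)
      (by
        show ContinuousOn
          (fun σ => (A (u (tn + σ)) + f (tn + σ)) - A (u (tn + σ))) (Icc 0 k)
        have he : (fun σ : ℝ => (A (u (tn + σ)) + f (tn + σ)) - A (u (tn + σ))) =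
            fun σ => f (tn + σ) := by
          funext σ; abel
        rw [he]
        exact (hfc.comp (by continuity)).continuousOn)
    have hcg : EqOn
        (fun σ => S (k - σ) ((A (u (tn + σ)) + f (tn + σ)) - A (u (tn + σ))))
        (fun σ => S (k - σ) (f (tn + σ))) (uIcc (0:ℝ) k) := by
      intro σ _
      exact congrArg _ (by abel)
    beta_reduce at hmaster
    rw [intervalIntegral.integral_congr hcg] at hmaster
    rw [sub_eq_iff_eq_add'] at hmaster
    simpa using hmaster
  -- bracket identity, part 1
  have hI1 : S k (u tn) =
      (∑ l ∈ range (s+1), (k ^ l / (Nat.factorial l : ℝ)) • (A ^ l) (u tn)) +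
        k ^ (s+1) • phiOp S (s+1) k ((A ^ (s+1)) (u tn)) := by
    rw [sg_I1 hS0 hSadd hScont hMbdd hgen hk0 hkT s (u tn)]
    rw [phi_int hScont hMbdd hk hkT s ((A ^ (s+1)) (u tn))]
  -- bracket identity, part 2
  have hW : ∀ i j : Fin s,
      ((∑ l ∈ range s, (k ^ l / (Nat.factorial (l + (j : ℕ) + 1) : ℝ)) •
          (A ^ l) (f (tn + c i * k))) +
        k ^ s • phiOp S (s + (j : ℕ) + 1) k ((A ^ s) (f (tn + c i * k)))) =
      phiOp S ((j : ℕ) + 1) k (f (tn + c i * k)) := by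
    intro i j
    have hkj : (k ^ ((j:ℕ)+1)) ≠ 0 := pow_ne_zero _ hk.ne'
    refine smul_right_injective X hkj ?_
    show k ^ ((j:ℕ)+1) • _ = k ^ ((j:ℕ)+1) • _
    rw [phi_int hScont hMbdd hk hkT (j:ℕ) (f (tn + c i * k))]
    rw [sg_I2 hS0 hSadd hScont hMbdd hgen hk0 hkT s (j:ℕ) (f (tn + c i * k))]
    rw [← phi_int hScont hMbdd hk hkT (s+(j:ℕ)) ((A ^ s) (f (tn + c i * k)))]
    rw [smul_add, Finset.smul_sum]
    congr 1
    · refine Finset.sum_congr rfl fun l _ => ?_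
      rw [smul_smul]
      congr 1
      rw [show l + (j:ℕ) + 1 = l + ((j:ℕ)+1) by omega, pow_add]
      ring
    · rw [smul_smul]
      congr 1
      rw [show s + (j:ℕ) + 1 = s + ((j:ℕ)+1) by omega, pow_add]
      ring
  -- split phi of f into polynomial + remainder parts
  have hsplit : ∀ i j : Fin s, phiOp S ((j:ℕ)+1) k (f (tn + c i * k)) =
      phiOp S ((j:ℕ)+1) k (P (c i * k)) + phiOp S ((j:ℕ)+1) k (Rem (c i * k)) := by
    intro i j
    rw [← phi_add hScont hMbdd hk hkT]
    congr 1
    rw [hRemd]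
    show f (tn + c i * k) = P (c i * k) + (f (tn + c i * k) - P (c i * k))
    abel
  have hIP : (∫ σ in (0:ℝ)..k, S (k - σ) (P σ)) =
      ∑ r ∈ range s, k ^ (r+1) • phiOp S (r+1) k (iteratedDeriv r f tn) := by
    have h1 : (∫ σ in (0:ℝ)..k, S (k - σ) (P σ)) =
        ∑ r ∈ range s, ∫ σ in (0:ℝ)..k,
          S (k - σ) ((σ ^ r / (Nat.factorial r : ℝ)) • iteratedDeriv r f tn) := by
      rw [← intervalIntegral.integral_finset_sum]
      · refine intervalIntegral.integral_congr fun σ _ => ?_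
        rw [hP, map_sum]
      · intro r _
        exact sg_intble hScont hMbdd hk0 hkT (by
          exact (by fun_prop : Continuous fun σ : ℝ => σ ^ r / (Nat.factorial r : ℝ)).smul
            continuous_const)
    rw [h1]
    refine Finset.sum_congr rfl fun r _ => ?_
    rw [phi_int hScont hMbdd hk hkT r (iteratedDeriv r f tn)]
  have hIf : (∫ σ in (0:ℝ)..k, S (k - σ) (f (tn + σ))) =
      (∫ σ in (0:ℝ)..k, S (k - σ) (P σ)) + ∫ σ in (0:ℝ)..k, S (k - σ) (Rem σ) := by
    rw [← intervalIntegral.integral_add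
      (sg_intble hScont hMbdd hk0 hkT hPcont)
      (sg_intble hScont hMbdd hk0 hkT hRemc)]
    refine intervalIntegral.integral_congr fun σ _ => ?_
    rw [← map_add]
    congr 1
    rw [hRemd]
    show f (tn + σ) = P σ + (f (tn + σ) - P σ)
    abel
  have hQP : (∑ i : Fin s, ∑ j : Fin s, a i j • phiOp S ((j:ℕ)+1) k (P (c i * k))) =
      ∑ j : Fin s, k ^ (j:ℕ) • phiOp S ((j:ℕ)+1) k (iteratedDeriv (j:ℕ) f tn) := by
    have h1 : ∀ i j : Fin s, a i j • phiOp S ((j:ℕ)+1) k (P (c i * k)) =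
        ∑ r ∈ range s, (a i j * ((c i * k) ^ r / (Nat.factorial r : ℝ))) •
          phiOp S ((j:ℕ)+1) k (iteratedDeriv r f tn) := by
      intro i j
      rw [hP]
      rw [phi_sum hScont hMbdd hk hkT]
      rw [Finset.smul_sum]
      refine Finset.sum_congr rfl fun r _ => ?_
      rw [phi_smul hScont hMbdd hk hkT, smul_smul]
    rw [Finset.sum_congr rfl (fun i _ => Finset.sum_congr rfl (fun j _ => h1 i j))]
    exact csl c hc a ha k (fun j r => phiOp S ((j:ℕ)+1) k (iteratedDeriv r f tn))
  have hQP2 : k • (∑ j : Fin s, k ^ (j:ℕ) • phiOp S ((j:ℕ)+1) k (iteratedDeriv (j:ℕ) f tn)) =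
      ∑ r ∈ range s, k ^ (r+1) • phiOp S (r+1) k (iteratedDeriv r f tn) := by
    rw [Finset.smul_sum,
      ← Fin.sum_univ_eq_sum_range
        (fun r => k ^ (r+1) • phiOp S (r+1) k (iteratedDeriv r f tn)) s]
    refine Finset.sum_congr rfl fun j _ => ?_
    rw [smul_smul, ← pow_succ']
  have hQsplit : (∑ i : Fin s, ∑ j : Fin s, a i j • phiOp S ((j:ℕ)+1) k (f (tn + c i * k))) =
      (∑ i : Fin s, ∑ j : Fin s, a i j • phiOp S ((j:ℕ)+1) k (P (c i * k))) +
      (∑ i : Fin s, ∑ j : Fin s, a i j • phiOp S ((j:ℕ)+1) k (Rem (c i * k))) := by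
    rw [← Finset.sum_add_distrib]
    refine Finset.sum_congr rfl fun i _ => ?_
    rw [← Finset.sum_add_distrib]
    refine Finset.sum_congr rfl fun j _ => ?_
    rw [hsplit i j, smul_add]
  -- rewrite the W sums in the goal
  have hWsum : (∑ i : Fin s, ∑ j : Fin s, a i j •
      ((∑ l ∈ range s, (k ^ l / (Nat.factorial (l + (j : ℕ) + 1) : ℝ)) •
          (A ^ l) (f (tn + c i * k))) +
        k ^ s • phiOp S (s + (j : ℕ) + 1) k ((A ^ s) (f (tn + c i * k))))) =
      ∑ i : Fin s, ∑ j : Fin s, a i j • phiOp S ((j:ℕ)+1) k (f (tn + c i * k)) :=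
    Finset.sum_congr rfl fun i _ => Finset.sum_congr rfl fun j _ => by rw [hW i j]
  have hkey : u (tn + k) -
      ((∑ l ∈ range (s+1), (k ^ l / (Nat.factorial l : ℝ)) • (A ^ l) (u tn)) +
        k ^ (s+1) • phiOp S (s+1) k ((A ^ (s+1)) (u tn)) +
        k • ∑ i : Fin s, ∑ j : Fin s, a i j •
          ((∑ l ∈ range s,
              (k ^ l / (Nat.factorial (l + (j : ℕ) + 1) : ℝ)) •
                (A ^ l) (f (tn + c i * k))) +
            k ^ s • phiOp S (s + (j : ℕ) + 1) k ((A ^ s) (f (tn + c i * k))))) =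
      (∫ σ in (0:ℝ)..k, S (k - σ) (Rem σ)) -
        k • ∑ i : Fin s, ∑ j : Fin s, a i j • phiOp S ((j:ℕ)+1) k (Rem (c i * k)) := by
    rw [hWsum, hQsplit, ← hI1, hvoc, hIf, hIP, smul_add, hQP, hQP2]
    abel
  rw [hkey]
  -- now the norm bounds
  have hb1 : ‖∫ σ in (0:ℝ)..k, S (k - σ) (Rem σ)‖ ≤ M * C2 * k ^ (s+1) := by
    have hb : ∀ σ ∈ Set.uIoc (0:ℝ) k, ‖S (k - σ) (Rem σ)‖ ≤ M * (C2 * k ^ s) := by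
      intro σ hσ
      rw [Set.uIoc_of_le hk0] at hσ
      obtain ⟨h1, h2⟩ := hσ
      have hσR : |σ| ≤ R := by rw [abs_of_nonneg h1.le]; linarith
      have e1 : ‖S (k - σ) (Rem σ)‖ ≤ M * ‖Rem σ‖ := by
        refine ((S (k - σ)).le_opNorm _).trans ?_
        exact mul_le_mul_of_nonneg_right (hMbdd _ ⟨by linarith, by linarith⟩) (norm_nonneg _)
      refine e1.trans (mul_le_mul_of_nonneg_left ?_ hMnn)
      refine (hRembd σ hσR).trans ?_
      refine mul_le_mul_of_nonneg_left ?_ hC20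
      rw [abs_of_nonneg h1.le]
      exact pow_le_pow_left₀ h1.le h2 s
    have := intervalIntegral.norm_integral_le_of_norm_le_const hb
    rw [sub_zero, abs_of_nonneg hk0] at this
    refine this.trans (le_of_eq ?_)
    rw [pow_succ]
    ring
  have hb2 : ‖k • ∑ i : Fin s, ∑ j : Fin s, a i j • phiOp S ((j:ℕ)+1) k (Rem (c i * k))‖ ≤
      Ca * (M * (C2 * B ^ s)) * k ^ (s+1) := by
    have hphib : ∀ i j : Fin s, ‖phiOp S ((j:ℕ)+1) k (Rem (c i * k))‖ ≤
        M * (C2 * B ^ s * k ^ s) := by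
      intro i j
      refine (phi_norm hMbdd hk hkT hMnn (j:ℕ) _).trans ?_
      refine mul_le_mul_of_nonneg_left ?_ hMnn
      have hcik : |c i * k| ≤ B * k := by
        rw [abs_mul, abs_of_nonneg hk0]
        exact mul_le_mul_of_nonneg_right (hBc i) hk0
      have hcikR : |c i * k| ≤ R := by
        refine hcik.trans ?_
        rw [hR]
        nlinarith [hB1]
      refine (hRembd _ hcikR).trans ?_
      have := pow_le_pow_left₀ (abs_nonneg (c i * k)) hcik s
      calc C2 * |c i * k| ^ s ≤ C2 * (B * k) ^ s :=
            mul_le_mul_of_nonneg_left this hC20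
        _ = C2 * B ^ s * k ^ s := by rw [mul_pow]; ring
    have hsum : ‖∑ i : Fin s, ∑ j : Fin s, a i j • phiOp S ((j:ℕ)+1) k (Rem (c i * k))‖ ≤
        Ca * (M * (C2 * B ^ s * k ^ s)) := by
      refine (norm_sum_le _ _).trans ?_
      have h1 : ∀ i : Fin s, ‖∑ j : Fin s, a i j • phiOp S ((j:ℕ)+1) k (Rem (c i * k))‖ ≤
          ∑ j : Fin s, |a i j| * (M * (C2 * B ^ s * k ^ s)) := by
        intro i
        refine (norm_sum_le _ _).trans ?_
        refine Finset.sum_le_sum fun j _ => ?_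
        rw [norm_smul, Real.norm_eq_abs]
        exact mul_le_mul_of_nonneg_left (hphib i j) (abs_nonneg _)
      refine (Finset.sum_le_sum fun i _ => h1 i).trans (le_of_eq ?_)
      rw [hCa, Finset.sum_mul]
      refine Finset.sum_congr rfl fun i _ => ?_
      rw [Finset.sum_mul]
    rw [norm_smul, Real.norm_eq_abs, abs_of_nonneg hk0]
    refine (mul_le_mul_of_nonneg_left hsum hk0).trans (le_of_eq ?_)
    rw [pow_succ]
    ring
  refine (norm_sub_le _ _).trans ?_
  calc ‖∫ σ in (0:ℝ)..k, S (k - σ) (Rem σ)‖ +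
        ‖k • ∑ i : Fin s, ∑ j : Fin s, a i j • phiOp S ((j:ℕ)+1) k (Rem (c i * k))‖
      ≤ M * C2 * k ^ (s+1) + Ca * (M * (C2 * B ^ s)) * k ^ (s+1) := add_le_add hb1 hb2
    _ = (M * C2 + Ca * (M * (C2 * B ^ s))) * k ^ (s+1) := by ring
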